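/- Let G be a monoid, σ an endomorphism of G, and g ∈ G. For all natural numbers r and t, ρ_{(g,1)^{rt}}(1_G) = ρ_{(g',r)^t}(1_G), where g' = ρ_{(g,1)^r}(1_G). In other words, the SDLP orbit at stride r is itself an SDLP orbit with automorphism σ^r and base element g'. -/
import Mathlib


/-- Multiplication in the semidirect product `G ⋊_σ ℕ`:
`(g,s)(g',s') = (g·σ^s(g'), s+s')`. -/
def sdMul {G : Type*} [Monoid G] (σ : Monoid.End G) (x y : G × ℕ) : G × ℕ :=
  (x.1 * (σ ^ x.2) y.1, x.2 + y.2)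

/-- The `t`-th power in the semidirect product `G ⋊_σ ℕ`. -/
def sdPow {G : Type*} [Monoid G] (σ : Monoid.End G) (x : G × ℕ) : ℕ → G × ℕ
  | 0 => (1, 0)
  | t + 1 => sdMul σ x (sdPow σ x t)

/-- The transformation `ρ_{(g,s)} : G → G`, `x ↦ g·σ^s(x)`. -/
def rho {G : Type*} [Monoid G] (σ : Monoid.End G) (x : G × ℕ) : G → G :=
  fun z => x.1 * (σ ^ x.2) z

/-- `ρ_{(g,1)^{rt}}(1_G) = ρ_{(g',r)^t}(1_G)` where
`g' = ρ_{(g,1)^r}(1_G)`: the SDLP orbit at stride `r` is an SDLP orbit for `σ^r`. -/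
theorem sdlp_stride {G : Type*} [Monoid G] (σ : Monoid.End G) (g : G) (r t : ℕ) :
    rho σ (sdPow σ (g, 1) (r * t)) 1
      = rho σ (sdPow σ (rho σ (sdPow σ (g, 1) r) 1, r) t) 1 := by
  have rho_one : ∀ x : G × ℕ, rho σ x 1 = x.1 := by
    intro x; simp [rho]
  have assoc : ∀ x y z : G × ℕ, sdMul σ x (sdMul σ y z) = sdMul σ (sdMul σ x y) z := by
    intro x y z
    simp [sdMul, pow_add, mul_assoc, Nat.add_assoc]
  have sdPow_add : ∀ (x : G × ℕ) (m n : ℕ),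
      sdPow σ x (m + n) = sdMul σ (sdPow σ x m) (sdPow σ x n) := by
    intro x m n
    induction m with
    | zero => simp [sdPow, sdMul]
    | succ m ih =>
      have : m + 1 + n = (m + n) + 1 := by omega
      rw [this, sdPow, ih, sdPow, assoc]
  have snd_sdPow : ∀ (x : G × ℕ) (n : ℕ), (sdPow σ x n).2 = x.2 * n := by
    intro x n
    induction n with
    | zero => simp [sdPow]
    | succ n ih => simp [sdPow, sdMul, ih]; ring
  rw [rho_one, rho_one]
  induction t with
  | zero => simp [sdPow]
  | succ t ih =>
    have : r * (t + 1) = r + r * t := by ring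
    rw [this, sdPow_add, sdPow]
    simp only [sdMul, snd_sdPow, one_mul, ih, rho_one]
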